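/- arXiv:1204.5430 — 4 statements merged into one kernel-verified Lean document; each statement's English description precedes it below -/
import Mathlib

section
/- Let l ≥ 1, q ≥ 1, and let ψ : 𝕊^l → ℝ^q be a C¹ map on the unit sphere 𝕊^l ⊂ ℝ^{l+1}. Define ψ̄ : ℝ^{l+1}∖{0} → ℝ^q by ψ̄(x) = ψ(x/‖x‖). Then for every x ≠ 0 the Hilbert–Schmidt norms of the differentials satisfy ‖Dψ̄(x)‖ = ‖x‖^{-1}·‖Dψ(x/‖x‖)‖, and consequently for every p ≥ 2 and every R > 0 one has the identity in [0,∞]: ∫_{B_R(0)} ‖Dψ̄(x)‖^p dx = (∫_0^R r^{l-p} dr)·(∫_{𝕊^l} ‖Dψ(θ)‖^p dσ(θ)), where dσ is the standard measure on 𝕊^l. -/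
open scoped Manifold
open MeasureTheory

/-- The Hilbert–Schmidt norm of a continuous linear map between Euclidean spaces,
computed via the standard orthonormal basis. -/
noncomputable def hsNorm {n q : ℕ}
    (T : EuclideanSpace ℝ (Fin n) →L[ℝ] EuclideanSpace ℝ (Fin q)) : ℝ :=
  Real.sqrt (∑ i, ‖T (EuclideanSpace.single i 1)‖ ^ 2)

lemma hsNorm_nonneg {n q : ℕ} (T : EuclideanSpace ℝ (Fin n) →L[ℝ] EuclideanSpace ℝ (Fin q)) :
    0 ≤ hsNorm T := Real.sqrt_nonneg _

lemma hsNorm_zero {n q : ℕ} :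
    hsNorm (0 : EuclideanSpace ℝ (Fin n) →L[ℝ] EuclideanSpace ℝ (Fin q)) = 0 := by
  simp [hsNorm]

lemma hsNorm_smul {n q : ℕ} (c : ℝ)
    (T : EuclideanSpace ℝ (Fin n) →L[ℝ] EuclideanSpace ℝ (Fin q)) :
    hsNorm (c • T) = |c| * hsNorm T := by
  simp only [hsNorm, ContinuousLinearMap.coe_smul', Pi.smul_apply, norm_smul,
    Real.norm_eq_abs, mul_pow]
  rw [← Finset.mul_sum, Real.sqrt_mul (sq_nonneg _), Real.sqrt_sq_eq_abs, abs_abs]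

lemma continuous_hsNorm {n q : ℕ} :
    Continuous (hsNorm (n := n) (q := q)) := by
  unfold hsNorm
  refine Real.continuous_sqrt.comp (continuous_finset_sum _ fun i _ => ?_)
  exact ((ContinuousLinearMap.apply ℝ (EuclideanSpace ℝ (Fin q))
    (EuclideanSpace.single i 1)).continuous.norm.pow 2)

section Aux

variable {l q : ℕ} {ψbar : EuclideanSpace ℝ (Fin (l + 1)) → EuclideanSpace ℝ (Fin q)}

/-- scaling invariance of the homogeneous extension, as an eventual equality -/
lemma aux_hev
    (hhom : ∀ c : ℝ, 0 < c → ∀ z : EuclideanSpace ℝ (Fin (l + 1)), z ≠ 0 →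
      ψbar (c • z) = ψbar z)
    (c : ℝ) (hc : 0 < c) (x : EuclideanSpace ℝ (Fin (l + 1))) (hx : x ≠ 0) :
    (fun z => ψbar (c • z)) =ᶠ[nhds x] ψbar :=
  Filter.eventuallyEq_of_mem (isOpen_compl_singleton.mem_nhds hx) fun z hz =>
    hhom c hc z hz

/-- key scaling identity for the HS norm of the derivative -/
lemma aux_key
    (hhom : ∀ c : ℝ, 0 < c → ∀ z : EuclideanSpace ℝ (Fin (l + 1)), z ≠ 0 →
      ψbar (c • z) = ψbar z)
    (c : ℝ) (hc : 0 < c) (x : EuclideanSpace ℝ (Fin (l + 1))) (hx : x ≠ 0) :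
    hsNorm (fderiv ℝ ψbar x) = c * hsNorm (fderiv ℝ ψbar (c • x)) := by
  by_cases hd : DifferentiableAt ℝ ψbar (c • x)
  · have hsm : DifferentiableAt ℝ
        (fun z : EuclideanSpace ℝ (Fin (l + 1)) => c • z) x :=
      (differentiable_id.const_smul c).differentiableAt
    have h1 : fderiv ℝ ψbar x = fderiv ℝ (fun z => ψbar (c • z)) x :=
      ((aux_hev hhom c hc x hx).fderiv_eq).symm
    have h2 : fderiv ℝ (fun z => ψbar (c • z)) x
        = (fderiv ℝ ψbar (c • x)).comp
          (fderiv ℝ (fun z : EuclideanSpace ℝ (Fin (l + 1)) => c • z) x) :=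
      fderiv_comp x hd hsm
    have h3 : fderiv ℝ (fun z : EuclideanSpace ℝ (Fin (l + 1)) => c • z) x
        = c • ContinuousLinearMap.id ℝ (EuclideanSpace ℝ (Fin (l + 1))) := by
      have : fderiv ℝ (fun z : EuclideanSpace ℝ (Fin (l + 1)) => c • id z) x
          = c • fderiv ℝ (id : EuclideanSpace ℝ (Fin (l + 1)) → _) x :=
        fderiv_const_smul differentiableAt_id c
      simpa [fderiv_id] using this
    rw [h1, h2, h3, ContinuousLinearMap.comp_smul, ContinuousLinearMap.comp_id,
      hsNorm_smul, abs_of_pos hc]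
  · have hx' : ¬ DifferentiableAt ℝ ψbar x := by
      intro h
      apply hd
      have hiff : DifferentiableAt ℝ
          (fun z : EuclideanSpace ℝ (Fin (l + 1)) => ψbar (c⁻¹ • z)) (c • x) := by
        have hψd : DifferentiableAt ℝ ψbar (c⁻¹ • c • x) := by
          rwa [inv_smul_smul₀ hc.ne']
        exact hψd.comp _ ((differentiable_id.const_smul c⁻¹).differentiableAt)
      exact hiff.congr_of_eventuallyEq
        ((aux_hev hhom c⁻¹ (inv_pos.2 hc) (c • x) (smul_ne_zero hc.ne' hx)).symm)
    rw [fderiv_zero_of_not_differentiableAt hd, fderiv_zero_of_not_differentiableAt hx',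
      hsNorm_zero, mul_zero]

end Aux

section P2
variable {l q : ℕ} (ψbar : EuclideanSpace ℝ (Fin (l + 1)) → EuclideanSpace ℝ (Fin q))

-- part 2 as standalone lemma, assuming part1-type hypothesis
lemma aux_part2
    (part1 : ∀ x : EuclideanSpace ℝ (Fin (l + 1)), x ≠ 0 →
      hsNorm (fderiv ℝ ψbar x) = ‖x‖⁻¹ * hsNorm (fderiv ℝ ψbar (‖x‖⁻¹ • x)))
    (p : ℝ) (hp : 2 ≤ p) (R : ℝ) (hR : 0 < R) :
    (∫⁻ x in Metric.ball (0 : EuclideanSpace ℝ (Fin (l + 1))) R,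
          ENNReal.ofReal (hsNorm (fderiv ℝ ψbar x) ^ p)) =
        (∫⁻ r in Set.Ioo (0 : ℝ) R, ENNReal.ofReal (r ^ ((l : ℝ) - p))) *
        ∫⁻ θ : Metric.sphere (0 : EuclideanSpace ℝ (Fin (l + 1))) 1,
          ENNReal.ofReal (hsNorm (fderiv ℝ ψbar (θ : EuclideanSpace ℝ (Fin (l + 1)))) ^ p)
          ∂(volume : Measure (EuclideanSpace ℝ (Fin (l + 1)))).toSphere := by
  have hp0 : (0:ℝ) ≤ p := le_trans (by norm_num) hp
  have hs_cont : Continuous (fun T : EuclideanSpace ℝ (Fin (l + 1)) →L[ℝ]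
      EuclideanSpace ℝ (Fin q) => hsNorm T) := by
    unfold hsNorm
    refine (continuous_finset_sum _ fun i _ => ?_).sqrt
    exact ((ContinuousLinearMap.apply ℝ (EuclideanSpace ℝ (Fin q))
      (EuclideanSpace.single i 1)).continuous.norm.pow 2)
  have hs_meas : Measurable (fun x : EuclideanSpace ℝ (Fin (l + 1)) =>
      hsNorm (fderiv ℝ ψbar x)) :=
    hs_cont.measurable.comp (measurable_fderiv ℝ ψbar)
  have hg_meas : Measurable (fun x : EuclideanSpace ℝ (Fin (l + 1)) =>
      ENNReal.ofReal (hsNorm (fderiv ℝ ψbar x) ^ p)) :=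
    ((Real.continuous_rpow_const hp0).measurable.comp hs_meas).ennreal_ofReal
  have hdim : Module.finrank ℝ (EuclideanSpace ℝ (Fin (l + 1))) = l + 1 :=
    finrank_euclideanSpace_fin
  set g : EuclideanSpace ℝ (Fin (l + 1)) → ENNReal :=
    fun x => ENNReal.ofReal (hsNorm (fderiv ℝ ψbar x) ^ p) with hgdef
  set f1 : (Metric.sphere (0 : EuclideanSpace ℝ (Fin (l + 1))) 1) → ENNReal :=
    fun θ => ENNReal.ofReal (hsNorm (fderiv ℝ ψbar (θ : EuclideanSpace ℝ (Fin (l + 1)))) ^ p)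
    with hf1def
  set f2 : (Set.Ioi (0:ℝ)) → ENNReal :=
    fun r => if (r : ℝ) < R then ENNReal.ofReal ((r : ℝ)⁻¹ ^ p) else 0 with hf2def
  have hf1m : Measurable f1 := hg_meas.comp continuous_subtype_val.measurable
  have hf2m : Measurable f2 := by
    refine Measurable.ite (measurableSet_lt measurable_subtype_coe measurable_const) ?_
      measurable_const
    exact ((Real.continuous_rpow_const hp0).measurable.comp
      measurable_subtype_coe.inv).ennreal_ofReal
  set e := homeomorphUnitSphereProd (EuclideanSpace ℝ (Fin (l + 1))) with hedef
  -- step 1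
  have step1 : (∫⁻ x in Metric.ball (0 : EuclideanSpace ℝ (Fin (l + 1))) R, g x)
      = ∫⁻ y : (Metric.sphere (0 : EuclideanSpace ℝ (Fin (l + 1))) 1) × (Set.Ioi (0:ℝ)),
          f1 y.1 * f2 y.2
          ∂((volume : Measure (EuclideanSpace ℝ (Fin (l + 1)))).toSphere.prod
            (Measure.volumeIoiPow (Module.finrank ℝ (EuclideanSpace ℝ (Fin (l + 1))) - 1))) := by
    rw [← lintegral_indicator measurableSet_ball]
    rw [show (∫⁻ x, (Metric.ball (0 : EuclideanSpace ℝ (Fin (l + 1))) R).indicator g x)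
        = ∫⁻ x in ({0}ᶜ : Set (EuclideanSpace ℝ (Fin (l + 1)))),
            (Metric.ball (0 : EuclideanSpace ℝ (Fin (l + 1))) R).indicator g x from
      (by rw [restrict_compl_singleton])]
    rw [← lintegral_subtype_comap (measurableSet_singleton
      (0 : EuclideanSpace ℝ (Fin (l + 1)))).compl]
    rw [← (Measure.measurePreserving_homeomorphUnitSphereProd
      (volume : Measure (EuclideanSpace ℝ (Fin (l + 1))))).lintegral_comp_emb
      (e.measurableEmbedding)
      (fun y => f1 y.1 * f2 y.2)]
    refine lintegral_congr fun x => ?_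
    rw [← hedef]
    have hx0 : (x : EuclideanSpace ℝ (Fin (l + 1))) ≠ 0 := x.2
    have hxpos : (0:ℝ) < ‖(x : EuclideanSpace ℝ (Fin (l + 1)))‖ := norm_pos_iff.2 hx0
    have he1 : ((e x).1 : EuclideanSpace ℝ (Fin (l + 1)))
        = ‖(x : EuclideanSpace ℝ (Fin (l + 1)))‖⁻¹ • (x : EuclideanSpace ℝ (Fin (l + 1))) := by simp [hedef]
    have he2 : ((e x).2 : ℝ) = ‖(x : EuclideanSpace ℝ (Fin (l + 1)))‖ := by simp [hedef]
    by_cases hlt : ‖(x : EuclideanSpace ℝ (Fin (l + 1)))‖ < R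
    · have hmem : (x : EuclideanSpace ℝ (Fin (l + 1))) ∈
          Metric.ball (0 : EuclideanSpace ℝ (Fin (l + 1))) R := by
        rw [Metric.mem_ball, dist_zero_right]; exact hlt
      rw [Set.indicator_of_mem hmem]
      simp only [hgdef, hf1def, hf2def, he1, he2, if_pos hlt]
      rw [part1 _ hx0, Real.mul_rpow (inv_nonneg.2 hxpos.le) (hsNorm_nonneg _),
        ENNReal.ofReal_mul (Real.rpow_nonneg (inv_nonneg.2 hxpos.le) p), mul_comm]
    · have hmem : (x : EuclideanSpace ℝ (Fin (l + 1))) ∉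
          Metric.ball (0 : EuclideanSpace ℝ (Fin (l + 1))) R := by
        rw [Metric.mem_ball, dist_zero_right]; exact hlt
      rw [Set.indicator_of_notMem hmem]
      simp only [hf2def, he2, if_neg hlt, mul_zero]
  -- step 2
  have step2 : (∫⁻ y : (Metric.sphere (0 : EuclideanSpace ℝ (Fin (l + 1))) 1) × (Set.Ioi (0:ℝ)),
          f1 y.1 * f2 y.2
          ∂((volume : Measure (EuclideanSpace ℝ (Fin (l + 1)))).toSphere.prod
            (Measure.volumeIoiPow (Module.finrank ℝ (EuclideanSpace ℝ (Fin (l + 1))) - 1))))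
      = (∫⁻ θ, f1 θ ∂(volume : Measure (EuclideanSpace ℝ (Fin (l + 1)))).toSphere)
        * ∫⁻ r, f2 r ∂(Measure.volumeIoiPow
            (Module.finrank ℝ (EuclideanSpace ℝ (Fin (l + 1))) - 1)) :=
    lintegral_prod_mul hf1m.aemeasurable hf2m.aemeasurable
  -- step 3: radial integral
  have hdim1 : Module.finrank ℝ (EuclideanSpace ℝ (Fin (l + 1))) - 1 = l := by omega
  have step3 : (∫⁻ r, f2 r ∂(Measure.volumeIoiPow
        (Module.finrank ℝ (EuclideanSpace ℝ (Fin (l + 1))) - 1)))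
      = ∫⁻ r in Set.Ioo (0:ℝ) R, ENNReal.ofReal (r ^ ((l : ℝ) - p)) := by
    rw [hdim1]
    rw [Measure.volumeIoiPow, lintegral_withDensity_eq_lintegral_mul _
      ((measurable_subtype_coe.pow_const l).ennreal_ofReal) hf2m]
    have hfun : (fun r : Set.Ioi (0:ℝ) =>
        ((fun r : Set.Ioi (0:ℝ) => ENNReal.ofReal ((r:ℝ) ^ l)) * f2) r)
        = fun r : Set.Ioi (0:ℝ) =>
            (fun s : ℝ => ENNReal.ofReal (s ^ l)
              * (if s < R then ENNReal.ofReal (s⁻¹ ^ p) else 0)) (r : ℝ) := by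
      funext r; simp [hf2def]
    have hsub := lintegral_subtype_comap (μ := (volume : Measure ℝ)) (s := Set.Ioi (0:ℝ)) measurableSet_Ioi
      (fun s : ℝ => ENNReal.ofReal (s ^ l)
        * (if s < R then ENNReal.ofReal (s⁻¹ ^ p) else 0))
    rw [hfun, hsub]
    have hind : (fun s : ℝ => ENNReal.ofReal (s ^ l)
          * (if s < R then ENNReal.ofReal (s⁻¹ ^ p) else 0))
        = (Set.Iio R).indicator
            (fun s : ℝ => ENNReal.ofReal (s ^ l) * ENNReal.ofReal (s⁻¹ ^ p)) := by
      funext s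
      by_cases hs' : s < R
      · rw [Set.indicator_of_mem (Set.mem_Iio.2 hs'), if_pos hs']
      · rw [Set.indicator_of_notMem (by simpa using hs'), if_neg hs', mul_zero]
    rw [hind, lintegral_indicator measurableSet_Iio,
      Measure.restrict_restrict measurableSet_Iio, Set.Iio_inter_Ioi]
    refine setLIntegral_congr_fun measurableSet_Ioo
      (fun s hsm => ?_)
    have hs0 : (0:ℝ) < s := hsm.1
    rw [← ENNReal.ofReal_mul (pow_nonneg hs0.le l)]
    congr 1
    rw [Real.inv_rpow hs0.le, ← Real.rpow_neg hs0.le, ← Real.rpow_natCast s l,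
      ← Real.rpow_add hs0, ← sub_eq_add_neg]
  rw [step1, step2, step3, mul_comm]
end P2


/-- Let `ψ : 𝕊^l → ℝ^q` be `C¹` and let `ψ̄(x) = ψ(x/‖x‖)` be its
`0`-homogeneous extension. Then `‖Dψ̄(x)‖ = ‖x‖⁻¹ ‖Dψ̄(x/‖x‖)‖` for all `x ≠ 0`
(at points `θ` of the unit sphere, `Dψ̄(θ)` coincides with the differential of `ψ` on
the sphere, extended by `0` in the radial direction, so `‖Dψ̄(θ)‖ = ‖Dψ(θ)‖` in the
Hilbert–Schmidt sense), and consequently for every `p ≥ 2` and `R > 0` one has, in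
`[0,∞]`,
`∫_{B_R(0)} ‖Dψ̄‖^p = (∫_0^R r^{l-p} dr) · (∫_{𝕊^l} ‖Dψ(θ)‖^p dσ(θ))`,
`dσ` being the standard surface measure of the unit sphere. -/
theorem energy_of_homogeneous_extension (l q : ℕ) (hl : 1 ≤ l) (hq : 1 ≤ q)
    [Fact (Module.finrank ℝ (EuclideanSpace ℝ (Fin (l + 1))) = l + 1)]
    (ψ : (Metric.sphere (0 : EuclideanSpace ℝ (Fin (l + 1))) 1) → EuclideanSpace ℝ (Fin q))
    (hψ : ContMDiff (𝓡 l) 𝓘(ℝ, EuclideanSpace ℝ (Fin q)) 1 ψ)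
    (ψbar : EuclideanSpace ℝ (Fin (l + 1)) → EuclideanSpace ℝ (Fin q))
    (hψbar : ∀ (y : Metric.sphere (0 : EuclideanSpace ℝ (Fin (l + 1))) 1) (c : ℝ), 0 < c →
      ψbar (c • (y : EuclideanSpace ℝ (Fin (l + 1)))) = ψ y) :
    (∀ x : EuclideanSpace ℝ (Fin (l + 1)), x ≠ 0 →
      hsNorm (fderiv ℝ ψbar x) = ‖x‖⁻¹ * hsNorm (fderiv ℝ ψbar (‖x‖⁻¹ • x))) ∧
    ∀ p : ℝ, 2 ≤ p → ∀ R : ℝ, 0 < R →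
      (∫⁻ x in Metric.ball (0 : EuclideanSpace ℝ (Fin (l + 1))) R,
          ENNReal.ofReal (hsNorm (fderiv ℝ ψbar x) ^ p)) =
        (∫⁻ r in Set.Ioo (0 : ℝ) R, ENNReal.ofReal (r ^ ((l : ℝ) - p))) *
        ∫⁻ θ : Metric.sphere (0 : EuclideanSpace ℝ (Fin (l + 1))) 1,
          ENNReal.ofReal (hsNorm (fderiv ℝ ψbar (θ : EuclideanSpace ℝ (Fin (l + 1)))) ^ p)
          ∂(volume : Measure (EuclideanSpace ℝ (Fin (l + 1)))).toSphere := by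
  have hval : ∀ z : EuclideanSpace ℝ (Fin (l + 1)), ∀ hz : z ≠ 0, ψbar z =
      ψ ⟨‖z‖⁻¹ • z, by rw [Metric.mem_sphere, dist_zero_right, norm_smul, norm_inv, norm_norm,
        inv_mul_cancel₀ (norm_ne_zero_iff.2 hz)]⟩ := by
    intro z hz
    have h := hψbar ⟨‖z‖⁻¹ • z, by
      rw [Metric.mem_sphere, dist_zero_right, norm_smul, norm_inv, norm_norm,
        inv_mul_cancel₀ (norm_ne_zero_iff.2 hz)]⟩ ‖z‖ (norm_pos_iff.2 hz)
    rw [smul_inv_smul₀ (norm_ne_zero_iff.2 hz)] at h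
    exact h
  have hhom : ∀ c : ℝ, 0 < c → ∀ z : EuclideanSpace ℝ (Fin (l + 1)), z ≠ 0 →
      ψbar (c • z) = ψbar z := by
    intro c hc z hz
    have hcz : c • z ≠ 0 := smul_ne_zero hc.ne' hz
    rw [hval _ hcz, hval _ hz]
    refine congrArg ψ (Subtype.ext ?_)
    show ‖c • z‖⁻¹ • (c • z) = ‖z‖⁻¹ • z
    rw [norm_smul, Real.norm_eq_abs, abs_of_pos hc, smul_smul]
    congr 1
    have hc0 : c ≠ 0 := hc.ne'
    have hz0 : ‖z‖ ≠ 0 := norm_ne_zero_iff.2 hz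
    rw [mul_inv]
    field_simp
  have part1 : ∀ x : EuclideanSpace ℝ (Fin (l + 1)), x ≠ 0 →
      hsNorm (fderiv ℝ ψbar x) = ‖x‖⁻¹ * hsNorm (fderiv ℝ ψbar (‖x‖⁻¹ • x)) := fun x hx =>
    aux_key hhom ‖x‖⁻¹ (inv_pos.2 (norm_pos_iff.2 hx)) x hx
  exact ⟨part1, fun p hp R hR => aux_part2 ψbar part1 p hp R hR⟩
end

section
/- Let ρ : [0,∞) → [0,∞) be smooth with ρ'(0) = 1 and ρ'' ≥ 0 (hence ρ' ≥ 1), and let σ : [0,∞) → [0,∞) be of hyperbolic type. Then for all 0 < R₁ < R₂ there exists k ≥ 1 such that ρ'(R₁) ≤ (σ_k(R₂) − ρ(R₁))/(R₂ − R₁) ≤ σ_k'(R₂), where σ_k(r) := k^{-1/2} σ(k^{1/2} r). -/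
/-- The rescaled warping function `σ_k(r) = k^{-1/2} σ(k^{1/2} r)`. -/
noncomputable def sigmaK (σ : ℝ → ℝ) (k r : ℝ) : ℝ :=
  (Real.sqrt k)⁻¹ * σ (Real.sqrt k * r)

/-- A smooth function `σ : [0,∞) → [0,∞)` is of *hyperbolic type*. -/
def IsHyperbolicType (σ : ℝ → ℝ) : Prop :=
  ContDiff ℝ (⊤ : ℕ∞) σ ∧ σ 0 = 0 ∧ deriv σ 0 = 1 ∧
    (∀ j : ℕ, iteratedDeriv (2 * j) σ 0 = 0) ∧
    (∀ r : ℝ, 0 < r → 0 < σ r) ∧ (∀ r : ℝ, 0 ≤ r → 0 ≤ σ r) ∧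
    (∀ r : ℝ, 0 ≤ r → 0 ≤ iteratedDeriv 2 σ r) ∧
    (∀ k : ℝ, 1 ≤ k → ∀ r : ℝ, 0 < r → sigmaK σ k r ≤ deriv (sigmaK σ k) r) ∧
    (∀ r : ℝ, 0 < r → Filter.Tendsto (fun k : ℝ => sigmaK σ k r) Filter.atTop Filter.atTop)

theorem sigmaK_deriv_eq (σ : ℝ → ℝ) (hdiff : Differentiable ℝ σ) (k : ℝ) (hk : 0 < k)
    (r : ℝ) : deriv (sigmaK σ k) r = deriv σ (Real.sqrt k * r) := by
  have h : Real.sqrt k ≠ 0 := (Real.sqrt_pos.2 hk).ne'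
  have h1 : HasDerivAt (fun r : ℝ => Real.sqrt k * r) (Real.sqrt k) r := by
    simpa using (hasDerivAt_id r).const_mul (Real.sqrt k)
  have h2 : HasDerivAt (fun r : ℝ => σ (Real.sqrt k * r))
      (deriv σ (Real.sqrt k * r) * Real.sqrt k) r :=
    (hdiff (Real.sqrt k * r)).hasDerivAt.comp r h1
  have h3 : HasDerivAt (sigmaK σ k)
      ((Real.sqrt k)⁻¹ * (deriv σ (Real.sqrt k * r) * Real.sqrt k)) r := h2.const_mul _
  rw [h3.deriv]
  field_simp

/-- For `ρ` smooth with `ρ'(0) = 1` and `ρ'' ≥ 0` on `[0,∞)` (hence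
`ρ' ≥ 1` there), `ρ ≥ 0` on `[0,∞)`, and `σ` of hyperbolic type, and any `0 < R₁ < R₂`,
one can choose `k ≥ 1` so that
`ρ'(R₁) ≤ (σ_k(R₂) − ρ(R₁))/(R₂ − R₁) ≤ σ_k'(R₂)`. -/
theorem slope_condition_for_gluing (ρ σ : ℝ → ℝ)
    (hρsmooth : ContDiff ℝ (⊤ : ℕ∞) ρ) (hρ'0 : deriv ρ 0 = 1)
    (hρconv : ∀ r : ℝ, 0 ≤ r → 0 ≤ iteratedDeriv 2 ρ r)
    (hρnonneg : ∀ r : ℝ, 0 ≤ r → 0 ≤ ρ r)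
    (hσ : IsHyperbolicType σ) :
    ∀ R₁ R₂ : ℝ, 0 < R₁ → R₁ < R₂ →
      ∃ k : ℝ, 1 ≤ k ∧
        deriv ρ R₁ ≤ (sigmaK σ k R₂ - ρ R₁) / (R₂ - R₁) ∧
        (sigmaK σ k R₂ - ρ R₁) / (R₂ - R₁) ≤ deriv (sigmaK σ k) R₂ := by
  obtain ⟨hC, h0, hd0, _, hpos, hnn, _, hineq, htend⟩ := hσ
  have hdiff : Differentiable ℝ σ := hC.differentiable (by simp)
  intro R₁ R₂ hR₁ h12
  have hd : (0:ℝ) < R₂ - R₁ := by linarith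
  have hR₂ : (0:ℝ) < R₂ := by linarith
  -- σ' ≥ σ on (0,∞), from the k = 1 case
  have hss : ∀ s : ℝ, 0 < s → σ s ≤ deriv σ s := by
    intro s hs
    have := hineq 1 le_rfl s hs
    rw [sigmaK_deriv_eq σ hdiff 1 one_pos s] at this
    simpa [sigmaK, Real.sqrt_one] using this
  -- choose k
  have h1 : ∀ᶠ k : ℝ in Filter.atTop,
      ρ R₁ + deriv ρ R₁ * (R₂ - R₁) ≤ sigmaK σ k R₂ :=
    (htend R₂ hR₂).eventually_ge_atTop _
  have h2 : ∀ᶠ k : ℝ in Filter.atTop, max 1 ((R₂ - R₁)⁻¹ ^ 2) ≤ k :=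
    Filter.eventually_ge_atTop _
  obtain ⟨k, hk1, hk2⟩ := (h1.and h2).exists
  have hk1' : (1:ℝ) ≤ k := le_trans (le_max_left _ _) hk2
  have hkpos : (0:ℝ) < k := by linarith
  have hsk : (0:ℝ) < Real.sqrt k := Real.sqrt_pos.2 hkpos
  have hskd : (R₂ - R₁)⁻¹ ≤ Real.sqrt k := by
    rw [show (R₂ - R₁)⁻¹ = Real.sqrt ((R₂ - R₁)⁻¹ ^ 2) by
      rw [Real.sqrt_sq (by positivity)]]
    exact Real.sqrt_le_sqrt (le_trans (le_max_right _ _) hk2)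
  refine ⟨k, hk1', ?_, ?_⟩
  · rw [le_div_iff₀ hd]
    linarith
  · have hσnn : 0 ≤ sigmaK σ k R₂ := by
      have := hnn (Real.sqrt k * R₂) (by positivity)
      unfold sigmaK
      positivity
    have hρR₁ : 0 ≤ ρ R₁ := hρnonneg R₁ hR₁.le
    have key : deriv σ (Real.sqrt k * R₂) ≥ Real.sqrt k * sigmaK σ k R₂ := by
      have h := hss (Real.sqrt k * R₂) (by positivity)
      have : Real.sqrt k * sigmaK σ k R₂ = σ (Real.sqrt k * R₂) := by
        unfold sigmaK; field_simp
      linarith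
    rw [sigmaK_deriv_eq σ hdiff k hkpos R₂, div_le_iff₀ hd]
    have h3 : 1 ≤ Real.sqrt k * (R₂ - R₁) := by
      rw [← inv_mul_cancel₀ hd.ne']
      exact mul_le_mul_of_nonneg_right hskd hd.le
    nlinarith [mul_le_mul_of_nonneg_left h3 hσnn]
end

section
/- Let (N,d) be a metric space and let G be a group acting on N by isometries, such that the action is proper in the following sense: for every p ∈ N and every R > 0, the set {γ ∈ G : B_R(p) ∩ γ·B_R(p) ≠ ∅} is finite, where B_R(p) = {x ∈ N : d(x,p) < R}. Let Γ₀ ⊇ Γ₁ ⊇ Γ₂ ⊇ … be a decreasing sequence of subgroups of G with ⋂_k Γ_k = {1}. Then for every p ∈ N and every R > 0 there exists K such that for all k ≥ K the ball B_R(p) is contained in the Dirichlet domain D_k(p) := {x ∈ N : d(x,p) < d(x, γ·p) for every γ ∈ Γ_k with γ ≠ 1}. -/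
open scoped Pointwise

/-- If a group `G` acts by isometries on a metric space `N`, properly in
the sense that each ball meets only finitely many of its translates, and `Γ₀ ⊇ Γ₁ ⊇ …` is
a decreasing sequence of subgroups with trivial intersection, then for every `p` and every
`R > 0` the ball `B_R(p)` is eventually contained in the Dirichlet domain
`D_k(p) = {x : d(x,p) < d(x,γ·p) for all 1 ≠ γ ∈ Γ_k}`. -/
theorem ball_subset_dirichlet_domain_of_filtration
    {N : Type*} [MetricSpace N] {G : Type*} [Group G] [MulAction G N]
    (hiso : ∀ (γ : G) (x y : N), dist (γ • x) (γ • y) = dist x y)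
    (hproper : ∀ (p : N) (R : ℝ), 0 < R →
      {γ : G | (Metric.ball p R ∩ γ • Metric.ball p R).Nonempty}.Finite)
    (Γ : ℕ → Subgroup G) (hmono : Antitone Γ)
    (hinter : (⋂ k, (Γ k : Set G)) = {1}) :
    ∀ (p : N) (R : ℝ), 0 < R → ∃ K : ℕ, ∀ k : ℕ, K ≤ k →
      Metric.ball p R ⊆
        {x : N | ∀ γ ∈ Γ k, γ ≠ 1 → dist x p < dist x (γ • p)} := by
  intro p R hR
  classical
  have hF := hproper p (2 * R) (by linarith)
  have hchoice : ∀ γ : G, γ ≠ 1 → ∃ k, γ ∉ Γ k := by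
    intro γ hγ
    by_contra h
    push_neg at h
    have : γ ∈ ⋂ k, (Γ k : Set G) := Set.mem_iInter.2 fun k => h k
    rw [hinter] at this
    exact hγ this
  choose f hf using hchoice
  set g : G → ℕ := fun γ => if h : γ ≠ 1 then f γ h else 0 with hg
  refine ⟨hF.toFinset.sup g, ?_⟩
  intro k hk x hx γ hγΓ hγ1
  by_contra hlt
  push_neg at hlt
  have hxp : dist x p < R := by simpa [Metric.mem_ball] using hx
  have h1 : γ • p ∈ Metric.ball p (2 * R) := by
    rw [Metric.mem_ball]
    calc dist (γ • p) p ≤ dist (γ • p) x + dist x p := dist_triangle _ _ _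
      _ = dist x (γ • p) + dist x p := by rw [dist_comm]
      _ ≤ dist x p + dist x p := by linarith
      _ < 2 * R := by linarith
  have h2 : γ • p ∈ γ • Metric.ball p (2 * R) :=
    ⟨p, Metric.mem_ball_self (by linarith), rfl⟩
  have hmem : γ ∈ {γ : G | (Metric.ball p (2 * R) ∩ γ • Metric.ball p (2 * R)).Nonempty} :=
    ⟨γ • p, h1, h2⟩
  have hle : g γ ≤ k := le_trans (Finset.le_sup (hF.mem_toFinset.2 hmem)) hk
  have hγnot : γ ∉ Γ (g γ) := by
    simp only [hg, dif_pos hγ1]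
    exact hf γ hγ1
  exact hγnot (hmono hle hγΓ)
end

section
/- Let 𝕋² = ℝ²/ℤ² be the flat 2-torus, let M = {[(x₁,x₂)] ∈ 𝕋² : x₁ ∈ [0,1/2] mod 1} (the image in 𝕋² of [0,1/2] × ℝ), a compact manifold with boundary ∂M = {[(x₁,x₂)] : x₁ ∈ {0,1/2} mod 1}. Define f : M → 𝕋² by f([(x₁,x₂)]) = [(3x₁,x₂)] (using the unique representative x₁ ∈ [0,1/2]) and let i : M ↪ 𝕋² be the inclusion. Then f is continuous, f = i on ∂M, the induced homomorphisms f_♯ and i_♯ from π₁(M) to π₁(𝕋²) are conjugate, but f and i are NOT homotopic relative to ∂M. -/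
/-- The flat 2-torus `𝕋² = ℝ²/ℤ²`, modelled as a product of two unit circles
`ℝ/ℤ`. -/
abbrev Torus2 : Type := UnitAddCircle × UnitAddCircle

/-- The compact submanifold-with-boundary `M ⊆ 𝕋²`: points whose first coordinate has a
representative in `[0, 1/2]`. -/
def Mset : Set Torus2 :=
  {p | ∃ x₁ ∈ Set.Icc (0 : ℝ) (1 / 2), ((x₁ : UnitAddCircle) = p.1)}

/-- The boundary `∂M ⊆ 𝕋²`: points whose first coordinate is `0` or `1/2` mod `1`. -/
def bdryMset : Set Torus2 :=
  {p | p.1 = ((0 : ℝ) : UnitAddCircle) ∨ p.1 = ((1 / 2 : ℝ) : UnitAddCircle)}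

/-- The base point `([0],[0]) ∈ M` (it lies on `∂M`). -/
noncomputable def basePt : Mset :=
  ⟨(((0 : ℝ) : UnitAddCircle), ((0 : ℝ) : UnitAddCircle)),
    ⟨0, by constructor <;> norm_num, rfl⟩⟩

open Set

noncomputable section


noncomputable section

def iot (z : AddCircle (1:ℝ)) : ℝ := (AddCircle.equivIco 1 (-(1/2)) z : ℝ)

lemma coe_iot (z : AddCircle (1:ℝ)) : ((iot z : ℝ) : AddCircle (1:ℝ)) = z :=
  (AddCircle.equivIco 1 (-(1/2))).symm_apply_apply z

lemma iot_mem (z : AddCircle (1:ℝ)) : iot z ∈ Ico (-(1/2) : ℝ) (1/2) := by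
  have h := (AddCircle.equivIco 1 (-(1/2) : ℝ) z).2
  norm_num at h ⊢
  exact h

lemma iot_coe {y : ℝ} (hy : y ∈ Ico (-(1/2) : ℝ) (1/2)) :
    iot ((y : ℝ) : AddCircle (1:ℝ)) = y := by
  have h1 := iot_mem ((y : ℝ) : AddCircle (1:ℝ))
  have h2 := coe_iot ((y : ℝ) : AddCircle (1:ℝ))
  have hmem : iot ((y : ℝ) : AddCircle (1:ℝ)) ∈ Ico (-(1/2):ℝ) (-(1/2) + 1) := by
    norm_num
    exact ⟨h1.1, by linarith [h1.2]⟩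
  exact (AddCircle.coe_eq_coe_iff_of_mem_Ico hmem
    (by constructor <;> [linarith [hy.1]; linarith [hy.2]])).mp h2

lemma iot_zero : iot 0 = 0 := by
  have h : ((0:ℝ) : AddCircle (1:ℝ)) = 0 := rfl
  rw [← h, iot_coe] ; norm_num

lemma ne_half {z : AddCircle (1:ℝ)} (hz : ‖z‖ < 1/2) :
    z ≠ ((-(1/2) : ℝ) : AddCircle (1:ℝ)) := by
  intro h
  rw [h, UnitAddCircle.norm_eq] at hz
  norm_num [round_eq] at hz

lemma contAt_iot {z : AddCircle (1:ℝ)} (hz : z ≠ ((-(1/2) : ℝ) : AddCircle (1:ℝ))) :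
    ContinuousAt iot z :=
  continuousAt_subtype_val.comp (AddCircle.continuousAt_equivIco 1 (-(1/2)) hz)

lemma const_of_lift {X : Type*} [TopologicalSpace X] [PreconnectedSpace X]
    {g : X → ℝ} (hg : Continuous g) (h : ∀ x, ((g x : ℝ) : AddCircle (1:ℝ)) = 0)
    (x y : X) : g x = g y := by
  have hint : ∀ x, ∃ n : ℤ, g x = n := by
    intro x
    obtain ⟨n, hn⟩ := (AddCircle.coe_eq_zero_iff (1:ℝ)).mp (h x)
    exact ⟨n, by simpa using hn.symm⟩
  by_contra hne
  obtain ⟨m, hm⟩ := hint x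
  obtain ⟨n, hn⟩ := hint y
  rcases lt_or_gt_of_ne hne with hlt | hlt
  · have hsub : Icc (g x) (g y) ⊆ range g := intermediate_value_univ x y hg
    have hmem : (m:ℝ) + 1/2 ∈ Icc (g x) (g y) := by
      constructor
      · rw [hm]; linarith
      · rw [hn] at hlt ⊢; rw [hm] at hlt
        have h1 : m + 1 ≤ n := Int.add_one_le_iff.mpr (by exact_mod_cast hlt)
        have : ((m:ℝ) + 1) ≤ n := by exact_mod_cast h1
        linarith
    obtain ⟨z, hz⟩ := hsub hmem
    obtain ⟨k, hk⟩ := hint z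
    rw [hk] at hz
    have h2 : ((2 * (k - m) : ℤ) : ℝ) = 1 := by push_cast; linarith
    have : (2 * (k - m) : ℤ) = 1 := by exact_mod_cast h2
    omega
  · have hsub : Icc (g y) (g x) ⊆ range g := intermediate_value_univ y x hg
    have hmem : (n:ℝ) + 1/2 ∈ Icc (g y) (g x) := by
      constructor
      · rw [hn]; linarith
      · rw [hm] at hlt ⊢; rw [hn] at hlt
        have h1 : n + 1 ≤ m := Int.add_one_le_iff.mpr (by exact_mod_cast hlt)
        have : ((n:ℝ) + 1) ≤ m := by exact_mod_cast h1
        linarith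
    obtain ⟨z, hz⟩ := hsub hmem
    obtain ⟨k, hk⟩ := hint z
    rw [hk] at hz
    have h2 : ((2 * (k - n) : ℤ) : ℝ) = 1 := by push_cast; linarith
    have : (2 * (k - n) : ℤ) = 1 := by exact_mod_cast h2
    omega

/-- clamp to `[0,1]` -/
def Cl (x : ℝ) : ℝ := (projIcc (0:ℝ) 1 zero_le_one x : ℝ)

lemma Cl_continuous : Continuous Cl :=
  continuous_subtype_val.comp (continuous_projIcc)

lemma Cl_mem (x : ℝ) : Cl x ∈ Icc (0:ℝ) 1 := (projIcc (0:ℝ) 1 zero_le_one x).2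

lemma Cl_of_mem {x : ℝ} (hx : x ∈ Icc (0:ℝ) 1) : Cl x = x := by
  rw [Cl, projIcc_of_mem zero_le_one hx]

lemma Cl_zero : Cl 0 = 0 := Cl_of_mem (by norm_num)
lemma Cl_one : Cl 1 = 1 := Cl_of_mem (by norm_num)

lemma Cl_lip (a b : ℝ) : |Cl a - Cl b| ≤ |a - b| := by
  have h := (LipschitzWith.projIcc (zero_le_one (α := ℝ))).dist_le_mul a b
  simpa [Cl, Subtype.dist_eq, Real.dist_eq] using h

lemma min_lip (c a b : ℝ) : |min c a - min c b| ≤ |a - b| := by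
  rcases abs_cases (a - b) with ⟨h1, h2⟩ | ⟨h1, h2⟩ <;>
    rcases le_total c a with ha | ha <;> rcases le_total c b with hb | hb <;>
      simp only [min_eq_left, min_eq_right, ha, hb, abs_le] <;> constructor <;> linarith

lemma Cl_min (t a : ℝ) (ha : a ∈ Icc (0:ℝ) 1) : Cl (min t a) = min (Cl t) a := by
  have hmono : Monotone Cl := fun x y hxy => by
    simp only [Cl]
    exact_mod_cast monotone_projIcc _ hxy
  rw [hmono.map_min, Cl_of_mem ha]

lemma no_square (F : ℝ × ℝ → AddCircle (1:ℝ)) (hF : Continuous F)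
    (hcl : ∀ t s : ℝ, F (t, s) = F (Cl t, Cl s))
    (h0 : ∀ s : ℝ, F (0, s) = ((3 * Cl s / 2 : ℝ) : AddCircle (1:ℝ)))
    (h1 : ∀ s : ℝ, F (1, s) = ((Cl s / 2 : ℝ) : AddCircle (1:ℝ)))
    (hl : ∀ t : ℝ, F (t, 0) = ((0 : ℝ) : AddCircle (1:ℝ)))
    (hr : ∀ t : ℝ, F (t, 1) = ((1/2 : ℝ) : AddCircle (1:ℝ))) : False := by
  -- uniform continuity on the square
  set K : Set (ℝ × ℝ) := Icc (0:ℝ) 1 ×ˢ Icc (0:ℝ) 1 with hK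
  have hKc : IsCompact K := (isCompact_Icc).prod isCompact_Icc
  have hUC : UniformContinuousOn F K :=
    hKc.uniformContinuousOn_of_continuous hF.continuousOn
  rw [Metric.uniformContinuousOn_iff] at hUC
  obtain ⟨δ, hδ, hδ'⟩ := hUC (1/2) (by norm_num)
  obtain ⟨n, hn⟩ := exists_nat_one_div_lt hδ
  set N : ℝ := (n : ℝ) + 1 with hN
  have hN0 : (0:ℝ) < N := by positivity
  -- key estimate
  have key : ∀ (t s a b : ℝ), a ∈ Icc (0:ℝ) 1 → b ∈ Icc (0:ℝ) 1 → |a - b| < δ →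
      ‖F (min t a, s) - F (min t b, s)‖ < 1/2 := by
    intro t s a b ha hb hab
    rw [hcl (min t a) s, hcl (min t b) s, Cl_min t a ha, Cl_min t b hb]
    have h1mem : (min (Cl t) a, Cl s) ∈ K := by
      refine ⟨⟨le_min (Cl_mem t).1 ha.1, min_le_of_right_le ha.2⟩, Cl_mem s⟩
    have h2mem : (min (Cl t) b, Cl s) ∈ K := by
      refine ⟨⟨le_min (Cl_mem t).1 hb.1, min_le_of_right_le hb.2⟩, Cl_mem s⟩
    have hd : dist ((min (Cl t) a, Cl s) : ℝ × ℝ) (min (Cl t) b, Cl s) < δ := by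
      rw [Prod.dist_eq]
      simp only [dist_self, Real.dist_eq]
      refine max_lt (lt_of_le_of_lt (min_lip _ _ _) hab) hδ
    have := hδ' _ h1mem _ h2mem hd
    rwa [dist_eq_norm] at this
  have hNδ : 1 / N < δ := by
    rw [hN]
    push_cast at hn
    exact hn
  -- the lift
  set L : ℝ × ℝ → ℝ := fun q => 3 * Cl q.2 / 2 +
    ∑ j ∈ Finset.range (n+1),
      iot (F (min q.1 (((j:ℝ)+1)/N), q.2) - F (min q.1 ((j:ℝ)/N), q.2)) with hL
  have hjmem : ∀ j : ℕ, j ∈ Finset.range (n+1) → ((j:ℝ)/N ∈ Icc (0:ℝ) 1 ∧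
      ((j:ℝ)+1)/N ∈ Icc (0:ℝ) 1 ∧ |((j:ℝ)+1)/N - (j:ℝ)/N| < δ) := by
    intro j hj
    have hjn : (j:ℝ) ≤ n := by exact_mod_cast Nat.lt_succ_iff.mp (Finset.mem_range.mp hj)
    refine ⟨⟨by positivity, by rw [div_le_one hN0]; rw [hN]; linarith⟩,
      ⟨by positivity, by rw [div_le_one hN0]; rw [hN]; linarith⟩, ?_⟩
    have : ((j:ℝ)+1)/N - (j:ℝ)/N = 1/N := by field_simp; ring
    rw [this, abs_of_pos (by positivity)]
    exact hNδ
  have keyj : ∀ (t s : ℝ) (j : ℕ), j ∈ Finset.range (n+1) →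
      ‖F (min t (((j:ℝ)+1)/N), s) - F (min t ((j:ℝ)/N), s)‖ < 1/2 := by
    intro t s j hj
    obtain ⟨hb, ha, hab⟩ := hjmem j hj
    exact key t s _ _ ha hb hab
  -- L is continuous
  have hLc : Continuous L := by
    rw [hL]
    refine Continuous.add ((continuous_const.mul (Cl_continuous.comp continuous_snd)).div_const 2) ?_
    refine continuous_finset_sum _ (fun j hj => ?_)
    rw [continuous_iff_continuousAt]
    intro q
    have hc : Continuous (fun q : ℝ × ℝ =>
        F (min q.1 (((j:ℝ)+1)/N), q.2) - F (min q.1 ((j:ℝ)/N), q.2)) := by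
      refine Continuous.sub ?_ ?_ <;>
        exact hF.comp ((continuous_fst.min continuous_const).prodMk continuous_snd)
    exact ContinuousAt.comp (x := q) (f := fun q : ℝ × ℝ =>
        F (min q.1 (((j:ℝ)+1)/N), q.2) - F (min q.1 ((j:ℝ)/N), q.2)) (g := iot)
      (contAt_iot (ne_half (keyj q.1 q.2 j hj))) hc.continuousAt
  -- L is a lift of F
  have hQL : ∀ q : ℝ × ℝ, ((L q : ℝ) : AddCircle (1:ℝ)) = F q := by
    intro q
    rw [hL]
    simp only
    rw [AddCircle.coe_add (p := (1:ℝ))]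
    have hsum : ∀ (g : ℕ → ℝ) (m : ℕ),
        ((∑ j ∈ Finset.range m, g j : ℝ) : AddCircle (1:ℝ)) =
          ∑ j ∈ Finset.range m, ((g j : ℝ) : AddCircle (1:ℝ)) := by
      intro g m
      induction m with
      | zero => simp
      | succ k ih => rw [Finset.sum_range_succ, Finset.sum_range_succ,
          AddCircle.coe_add, ih]
    rw [hsum]
    simp only [coe_iot]
    have htel := Finset.sum_range_sub
      (f := fun j : ℕ => F (min q.1 ((j:ℝ)/N), q.2)) (n+1)
    push_cast at htel
    rw [htel]
    have e1 : F (min q.1 (((n:ℝ)+1)/N), q.2) = F q := by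
      rw [hN, div_self (by rw [hN] at hN0; exact ne_of_gt hN0)]
      rw [hcl (min q.1 1) q.2, Cl_min q.1 1 (by norm_num),
        min_eq_left (Cl_mem q.1).2, ← hcl]
    have e2 : F (min q.1 ((0:ℝ)/N), q.2) = F (0, q.2) := by
      rw [zero_div, hcl (min q.1 0) q.2, Cl_min q.1 0 (by norm_num),
        min_eq_right (Cl_mem q.1).1]
      rw [hcl 0 q.2, Cl_zero]
    rw [e1, e2, h0 q.2]
    abel
  -- L at t = 0
  have hL0 : ∀ s : ℝ, L (0, s) = 3 * Cl s / 2 := by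
    intro s
    rw [hL]
    simp only
    have : ∀ j ∈ Finset.range (n+1),
        iot (F (min (0:ℝ) (((j:ℝ)+1)/N), s) - F (min (0:ℝ) ((j:ℝ)/N), s)) = 0 := by
      intro j hj
      have ha : min (0:ℝ) (((j:ℝ)+1)/N) = 0 := min_eq_left (by positivity)
      have hb : min (0:ℝ) ((j:ℝ)/N) = 0 := min_eq_left (by positivity)
      rw [ha, hb, sub_self, iot_zero]
    rw [Finset.sum_congr rfl this]
    simp
  -- the three constant sides
  have hcoe_sub : ∀ x y : ℝ, ((x - y : ℝ) : AddCircle (1:ℝ)) = (x:ℝ) - (y:ℝ) := by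
    intro x y
    exact AddCircle.coe_sub (p := (1:ℝ)) x y
  -- left side s = 0 : L (t,0) = 0
  have hside0 : ∀ t : ℝ, L (t, 0) = 0 := by
    intro t
    have hcont : Continuous (fun t : ℝ => L (t, 0)) :=
      hLc.comp (continuous_id.prodMk continuous_const)
    have hlift : ∀ t : ℝ, ((L (t, 0) : ℝ) : AddCircle (1:ℝ)) = 0 := by
      intro t
      rw [hQL (t, 0), hl t]
      norm_num
    have := const_of_lift hcont hlift t 0
    rw [this, hL0 0, Cl_zero]
    ring
  -- right side s = 1 : L (t,1) = 3/2
  have hside1 : ∀ t : ℝ, L (t, 1) = 3/2 := by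
    intro t
    have hcont : Continuous (fun t : ℝ => L (t, 1) - 3/2) :=
      (hLc.comp (continuous_id.prodMk continuous_const)).sub continuous_const
    have hlift : ∀ t : ℝ, ((L (t, 1) - 3/2 : ℝ) : AddCircle (1:ℝ)) = 0 := by
      intro t
      rw [hcoe_sub, hQL (t, 1), hr t, ← hcoe_sub]
      rw [show (1/2 : ℝ) - 3/2 = -1 by ring]
      rw [AddCircle.coe_eq_zero_iff]
      exact ⟨-1, by simp⟩
    have := const_of_lift hcont hlift t 0
    have h2 : L (0, 1) = 3/2 := by rw [hL0 1, Cl_one]; ring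
    have : L (t, 1) - 3/2 = L (0, 1) - 3/2 := this
    linarith
  -- bottom side t = 1 : L (1,s) = Cl s / 2
  have hbot : ∀ s : ℝ, L (1, s) = Cl s / 2 := by
    intro s
    have hcont : Continuous (fun s : ℝ => L (1, s) - Cl s / 2) :=
      (hLc.comp (continuous_const.prodMk continuous_id)).sub
        (Cl_continuous.div_const 2)
    have hlift : ∀ s : ℝ, ((L (1, s) - Cl s / 2 : ℝ) : AddCircle (1:ℝ)) = 0 := by
      intro s
      rw [hcoe_sub, hQL (1, s), h1 s, sub_self]
    have h3 : L (1, s) - Cl s / 2 = L (1, 0) - Cl 0 / 2 :=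
      const_of_lift hcont hlift s 0
    have h2 : L (1, 0) = 0 := hside0 1
    rw [Cl_zero, h2] at h3
    linarith
  -- contradiction
  have c1 : L (1, 1) = 3/2 := hside1 1
  have c2 : L (1, 1) = 1/2 := by rw [hbot 1, Cl_one]
  linarith


end

end


noncomputable section

/-- the canonical representative in `[0,1/2]` of the first coordinate -/
def rep (m : Mset) : ℝ := (AddCircle.equivIco 1 (-(1/4)) (m : Torus2).1 : ℝ)

lemma rep_eq {m : Mset} {x : ℝ} (hx : x ∈ Icc (0:ℝ) (1/2))
    (hm : ((x : ℝ) : UnitAddCircle) = (m : Torus2).1) : rep m = x := by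
  have h2 : (((rep m : ℝ)) : UnitAddCircle) = (m : Torus2).1 :=
    (AddCircle.equivIco 1 (-(1/4))).symm_apply_apply (m : Torus2).1
  have h1 : rep m ∈ Ico (-(1/4) : ℝ) (-(1/4) + 1) :=
    (AddCircle.equivIco 1 (-(1/4)) (m : Torus2).1).2
  have hx' : x ∈ Ico (-(1/4) : ℝ) (-(1/4) + 1) := by
    constructor <;> [linarith [hx.1]; linarith [hx.2]]
  exact (AddCircle.coe_eq_coe_iff_of_mem_Ico h1 hx').mp (h2.trans hm.symm)

lemma rep_mem (m : Mset) : rep m ∈ Icc (0:ℝ) (1/2) := by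
  obtain ⟨x₁, hx₁, hQ⟩ := m.2
  rw [rep_eq hx₁ hQ]
  exact hx₁

lemma coe_rep (m : Mset) : ((rep m : ℝ) : UnitAddCircle) = (m : Torus2).1 :=
  (AddCircle.equivIco 1 (-(1/4))).symm_apply_apply (m : Torus2).1

lemma rep_continuous : Continuous rep := by
  rw [continuous_iff_continuousAt]
  intro m
  have hne : (m : Torus2).1 ≠ ((-(1/4) : ℝ) : UnitAddCircle) := by
    intro h
    have h1 : rep m ∈ Ico (-(1/4) : ℝ) (-(1/4) + 1) :=
      (AddCircle.equivIco 1 (-(1/4)) (m : Torus2).1).2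
    have h2 := (coe_rep m).trans h
    have h3 : rep m = -(1/4) :=
      (AddCircle.coe_eq_coe_iff_of_mem_Ico h1 (by constructor <;> norm_num)).mp h2
    linarith [(rep_mem m).1]
  have hc : ContinuousAt (fun m : Mset => (m : Torus2).1) m :=
    (continuous_subtype_val.fst).continuousAt
  exact ContinuousAt.comp (x := m)
    (g := fun z : UnitAddCircle => (AddCircle.equivIco 1 (-(1/4)) z : ℝ))
    (f := fun m : Mset => (m : Torus2).1)
    (continuousAt_subtype_val.comp (AddCircle.continuousAt_equivIco 1 (-(1/4)) hne)) hc

lemma rep_basePt : rep basePt = 0 := rep_eq (by norm_num) rfl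


end

set_option maxHeartbeats 2000000 in
/-- Let `M = {[(x₁,x₂)] : x₁ ∈ [0,1/2] mod 1} ⊆ 𝕋²`, let
`f : M → 𝕋²` be `f([(x₁,x₂)]) = [(3x₁,x₂)]` (via the unique representative
`x₁ ∈ [0,1/2]`), and let `i : M ↪ 𝕋²` be the inclusion. Then `f` is continuous, `f = i`
on `∂M`, the induced homomorphisms `f_♯` and `i_♯` on fundamental groups are conjugate
(expressed by a fixed connecting path `g`, conjugating the image of every loop class),
but `f` and `i` are NOT homotopic relative to `∂M`. -/
theorem torus_counterexample_not_rel_homotopic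
    (f : Mset → Torus2)
    (hf : ∀ p : Mset, ∃ x₁ ∈ Set.Icc (0 : ℝ) (1 / 2), ∃ x₂ : ℝ,
      (p : Torus2) = (((x₁ : ℝ) : UnitAddCircle), ((x₂ : ℝ) : UnitAddCircle)) ∧
      f p = (((3 * x₁ : ℝ) : UnitAddCircle), ((x₂ : ℝ) : UnitAddCircle))) :
    ∃ (hfc : Continuous f) (h₀ : f basePt = (basePt : Torus2)),
      -- `f` agrees with the inclusion on `∂M`
      (∀ p : Mset, (p : Torus2) ∈ bdryMset → f p = (p : Torus2)) ∧
      -- `f_♯` and `i_♯` are conjugate homomorphisms `π₁(M) → π₁(𝕋²)`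
      (∃ g : Path ((basePt : Mset) : Torus2) (basePt : Torus2),
        ∀ γ : Path basePt basePt,
          Path.Homotopic
            (g.symm.trans ((γ.map continuous_subtype_val).trans g))
            ((γ.map hfc).cast h₀.symm h₀.symm)) ∧
      -- but `f` and the inclusion are NOT homotopic relative to `∂M`
      ¬ ∃ H : ℝ × Mset → Torus2,
          ContinuousOn H (Set.Icc (0 : ℝ) 1 ×ˢ (Set.univ : Set Mset)) ∧
          (∀ p : Mset, H (0, p) = f p) ∧
          (∀ p : Mset, H (1, p) = (p : Torus2)) ∧
          (∀ t ∈ Set.Icc (0 : ℝ) 1, ∀ p : Mset,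
            (p : Torus2) ∈ bdryMset → H (t, p) = (p : Torus2)) := by
  have hf' : ∀ p : Mset,
      f p = (((3 * rep p : ℝ) : UnitAddCircle), (p : Torus2).2) := by
    intro p
    obtain ⟨x₁, hx₁, x₂, hp, hfp⟩ := hf p
    have h1 : ((x₁ : ℝ) : UnitAddCircle) = (p : Torus2).1 := by rw [hp]
    have hrep : rep p = x₁ := rep_eq hx₁ h1
    have h2 : (p : Torus2).2 = ((x₂ : ℝ) : UnitAddCircle) := by rw [hp]
    rw [hfp, hrep, h2]
  have hfc : Continuous f := by
    have he : f = fun p => (((3 * rep p : ℝ) : UnitAddCircle), (p : Torus2).2) :=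
      funext hf'
    rw [he]
    exact (continuous_quotient_mk'.comp
      (continuous_const.mul rep_continuous)).prodMk continuous_subtype_val.snd
  have h₀ : f basePt = (basePt : Torus2) := by
    rw [hf' basePt, rep_basePt, show (3 * (0:ℝ)) = 0 by ring]
    rfl
  refine ⟨hfc, h₀, ?_, ?_, ?_⟩
  · -- boundary
    intro p hp
    rw [hf' p]
    rcases hp with h | h
    · refine Prod.ext ?_ rfl
      rw [rep_eq (by norm_num) h.symm, show (3 * (0:ℝ)) = 0 by ring]
      exact h.symm
    · refine Prod.ext ?_ rfl
      rw [rep_eq (by norm_num) h.symm, show (3 * ((1:ℝ)/2)) = 1/2 + 1 by ring,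
        AddCircle.coe_add, AddCircle.coe_period, add_zero]
      exact h.symm
  · -- conjugacy
    refine ⟨Path.refl _, fun γ => ?_⟩
    have hhom : (γ.map continuous_subtype_val).Homotopic
        ((γ.map hfc).cast h₀.symm h₀.symm) := by
      refine ⟨{
        toFun := fun x =>
          ((((1 + 2 * (x.1 : ℝ)) * rep (γ x.2) : ℝ) : UnitAddCircle),
            ((γ x.2 : Torus2)).2),
        continuous_toFun := by
          refine Continuous.prodMk (continuous_quotient_mk'.comp ?_) ?_
          · exact (continuous_const.add (continuous_const.mul
              (continuous_subtype_val.comp continuous_fst))).mul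
              (rep_continuous.comp (γ.continuous.comp continuous_snd))
          · exact continuous_subtype_val.snd.comp (γ.continuous.comp continuous_snd)
        map_zero_left := fun s => by
          simp only [ContinuousMap.coe_mk, Icc.coe_zero]
          rw [show ((1:ℝ) + 2 * 0) * rep (γ s) = rep (γ s) by ring]
          exact Prod.ext (coe_rep _) rfl
        map_one_left := fun s => by
          simp only [ContinuousMap.coe_mk, Icc.coe_one]
          show _ = f (γ s)
          rw [hf' (γ s), show ((1:ℝ) + 2 * 1) = 3 by ring]
        prop' := by
          intro t x hx
          simp only [Set.mem_insert_iff, Set.mem_singleton_iff] at hx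
          rcases hx with rfl | rfl
          · simp only [ContinuousMap.coe_mk, Path.coe_toContinuousMap, Path.map_coe,
              Function.comp_apply, γ.source, rep_basePt, mul_zero]
            rfl
          · simp only [ContinuousMap.coe_mk, Path.coe_toContinuousMap, Path.map_coe,
              Function.comp_apply, γ.target, rep_basePt, mul_zero]
            rfl }⟩
    rw [Path.refl_symm]
    exact Path.Homotopic.trans ⟨Path.Homotopy.reflTrans _⟩
      (Path.Homotopic.trans ⟨Path.Homotopy.transRefl _⟩ hhom)
  · -- not rel-homotopic
    rintro ⟨H, Hc, H0, H1, Hbd⟩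
    have hmemc : ∀ s : ℝ, Cl s / 2 ∈ Icc (0:ℝ) (1/2) := by
      intro s
      constructor
      · linarith [(Cl_mem s).1]
      · linarith [(Cl_mem s).2]
    set c : ℝ → Mset := fun s =>
      ⟨(((Cl s / 2 : ℝ) : UnitAddCircle), ((0 : ℝ) : UnitAddCircle)),
        ⟨Cl s / 2, hmemc s, rfl⟩⟩ with hc
    have hcc : Continuous c := by
      refine Continuous.subtype_mk ?_ _
      exact (continuous_quotient_mk'.comp (Cl_continuous.div_const 2)).prodMk
        continuous_const
    have hrepc : ∀ s : ℝ, rep (c s) = Cl s / 2 := fun s => rep_eq (hmemc s) rfl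
    set F : ℝ × ℝ → UnitAddCircle := fun q => (H (Cl q.1, c q.2)).1 with hF
    have hFc : Continuous F := by
      refine Continuous.fst ?_
      refine Hc.comp_continuous ?_ ?_
      · exact (Cl_continuous.comp continuous_fst).prodMk (hcc.comp continuous_snd)
      · exact fun q => ⟨Cl_mem q.1, Set.mem_univ _⟩
    have hclF : ∀ t s : ℝ, F (t, s) = F (Cl t, Cl s) := by
      intro t s
      have e1 : Cl (Cl t) = Cl t := Cl_of_mem (Cl_mem t)
      have e2 : c (Cl s) = c s := by
        apply Subtype.ext
        show (_, _) = (_, _)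
        rw [Cl_of_mem (Cl_mem s)]
      simp only [hF, e1, e2]
    have h0F : ∀ s : ℝ, F (0, s) = ((3 * Cl s / 2 : ℝ) : UnitAddCircle) := by
      intro s
      show (H (Cl 0, c s)).1 = _
      rw [Cl_zero, H0 (c s), hf' (c s), hrepc s]
      show ((3 * (Cl s / 2) : ℝ) : UnitAddCircle) = _
      norm_num [mul_div_assoc]
    have h1F : ∀ s : ℝ, F (1, s) = ((Cl s / 2 : ℝ) : UnitAddCircle) := by
      intro s
      show (H (Cl 1, c s)).1 = _
      rw [Cl_one, H1 (c s)]
    have hlF : ∀ t : ℝ, F (t, 0) = ((0 : ℝ) : UnitAddCircle) := by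
      intro t
      show (H (Cl t, c 0)).1 = _
      have hb : ((c 0 : Mset) : Torus2) ∈ bdryMset := by
        left
        show ((Cl 0 / 2 : ℝ) : UnitAddCircle) = _
        rw [Cl_zero, zero_div]
      rw [Hbd (Cl t) (Cl_mem t) (c 0) hb]
      show ((Cl 0 / 2 : ℝ) : UnitAddCircle) = _
      rw [Cl_zero, zero_div]
    have hrF : ∀ t : ℝ, F (t, 1) = ((1/2 : ℝ) : UnitAddCircle) := by
      intro t
      show (H (Cl t, c 1)).1 = _
      have hb : ((c 1 : Mset) : Torus2) ∈ bdryMset := by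
        right
        show ((Cl 1 / 2 : ℝ) : UnitAddCircle) = _
        rw [Cl_one]
      rw [Hbd (Cl t) (Cl_mem t) (c 1) hb]
      show ((Cl 1 / 2 : ℝ) : UnitAddCircle) = _
      rw [Cl_one]
    exact no_square F hFc hclF h0F h1F hlF hrF
end
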